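/- Local-search guarantee under a matroid constraint: Let f : 2^X → ℝ₊ be submodular and M a matroid on X with independent sets I. If S ∈ I is a local optimum in the sense that f cannot be increased by adding, deleting, or swapping a single element within I, then for any C ∈ I, 2·f(S) ≥ f(S ∪ C) + f(S ∩ C) ≥ f(S ∪ C). -/

import Mathlib

open Set
open scoped Matroid

/-- Submodularity for set functions. -/
def SubmodularOn {X : Type*} (f : Set X → ℝ) : Prop :=
  ∀ S T : Set X, f (S ∪ T) + f (S ∩ T) ≤ f S + f T

/-- If `b` is spanned by `B \ {e}` for every `e ∈ F`, then `b` is spanned by `B \ F`. -/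
lemma base_closure_of_forall {X : Type*} {M : Matroid X} {B F : Set X} {b : X}
    (hB : M.IsBase B) (hBfin : B.Finite) (hb : b ∈ M.E) (hbB : b ∉ B) (hFB : F ⊆ B)
    (h : ∀ e ∈ F, b ∈ M.closure (B \ {e})) : b ∈ M.closure (B \ F) := by
  by_contra hcon
  have hBF : M.Indep (B \ F) := hB.indep.subset diff_subset
  have hind : M.Indep (insert b (B \ F)) := by
    rw [hBF.insert_indep_iff_of_notMem (fun h' => hbB h'.1)]
    exact ⟨hb, hcon⟩
  obtain ⟨B3, hB3, hIB3, hB3sub⟩ := hind.exists_isBase_subset_union_isBase hB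
  have hbB3 : b ∈ B3 := hIB3 (mem_insert _ _)
  have hssub : ¬ B ⊆ B3 := fun hsub => hbB ((hB.eq_of_subset_isBase hB3 hsub) ▸ hbB3)
  obtain ⟨e, heB, heB3⟩ := not_subset.1 hssub
  have heF : e ∈ F := by
    by_contra heF
    exact heB3 (hIB3 (mem_insert_of_mem _ ⟨heB, heF⟩))
  have hbe : b ≠ e := fun h => hbB (h ▸ heB)
  have hsub2 : B3 ⊆ insert b (B \ {e}) := by
    intro x hx
    rcases hB3sub hx with hx' | hxB
    · rcases hx' with rfl | hxx
      · exact mem_insert _ _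
      · exact mem_insert_of_mem _ ⟨hxx.1, fun hxe => heB3 (hxe ▸ hx)⟩
    · exact mem_insert_of_mem _ ⟨hxB, fun hxe => heB3 ((mem_singleton_iff.1 hxe) ▸ hx)⟩
  have hcard : (insert b (B \ {e})).encard ≤ B3.encard := by
    rw [hB3.encard_eq_encard_of_isBase hB, encard_insert_of_notMem (fun h => hbB h.1),
      encard_diff_singleton_add_one heB]
  have heq : B3 = insert b (B \ {e}) :=
    ((hBfin.subset diff_subset).insert b).eq_of_subset_of_encard_le' hsub2 hcard
  have : M.Indep (insert b (B \ {e})) := heq ▸ hB3.indep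
  have hnotcl : b ∉ M.closure (B \ {e}) := by
    have := this.notMem_closure_diff_of_mem (mem_insert _ _)
    rwa [insert_diff_self_of_notMem (fun h => hbB h.1)] at this
  exact hnotcl (h e heF)

/-- Brualdi-type exchange: an injection `σ` on `B2 \ B1` into `B1 \ B2` such that
`B1 - σ b + b` is a base for each `b ∈ B2 \ B1`. -/
lemma exists_exchange_inj {X : Type*} [Fintype X] {M : Matroid X} {B1 B2 : Set X}
    (hB1 : M.IsBase B1) (hB2 : M.IsBase B2) :
    ∃ σ : X → X, Set.InjOn σ (B2 \ B1) ∧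
      ∀ b ∈ B2 \ B1, σ b ∈ B1 \ B2 ∧ M.IsBase (insert b (B1 \ {σ b})) := by
  classical
  set D : Set X := B2 \ B1 with hD
  set t : X → Finset X :=
    fun b => Finset.univ.filter (fun e => e ∈ B1 \ B2 ∧ M.IsBase (insert b (B1 \ {e}))) with ht
  have hhall : ∀ s : Finset {x // x ∈ D}, s.card ≤ (s.biUnion (fun b => t b.1)).card := by
    intro s
    set A : Set X := (fun (b : {x // x ∈ D}) => b.1) '' ↑s with hA
    set NA : Set X := ↑(s.biUnion (fun b => t b.1)) with hNA
    have hNAmem : ∀ e, e ∈ NA ↔ ∃ b ∈ A, e ∈ B1 \ B2 ∧ M.IsBase (insert b (B1 \ {e})) := by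
      intro e
      simp only [hNA, Finset.coe_biUnion, mem_iUnion, Finset.mem_coe, ht,
        Finset.mem_filter, Finset.mem_univ, true_and, hA, mem_image]
      constructor
      · rintro ⟨b, hb, h1, h2⟩; exact ⟨b.1, ⟨b, hb, rfl⟩, h1, h2⟩
      · rintro ⟨x, ⟨b, hb, rfl⟩, h1, h2⟩; exact ⟨b, hb, h1, h2⟩
    have hNAsub : NA ⊆ B1 \ B2 := fun e he => ((hNAmem e).1 he).choose_spec.2.1
    have hAsub : A ⊆ D := by rintro x ⟨b, _, rfl⟩; exact b.2
    -- every b ∈ A is spanned by Y = (B1 ∩ B2) ∪ NA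
    set Y : Set X := (B1 ∩ B2) ∪ NA with hY
    have hYB1 : Y ⊆ B1 := union_subset inter_subset_left (hNAsub.trans diff_subset)
    have hBF : B1 \ ((B1 \ B2) \ NA) = Y := by
      ext x
      simp only [hY, mem_diff, mem_union, mem_inter_iff]
      constructor
      · rintro ⟨hx1, hx2⟩
        by_cases hx3 : x ∈ B2
        · exact Or.inl ⟨hx1, hx3⟩
        · exact Or.inr (by_contra fun hna => hx2 ⟨⟨hx1, hx3⟩, hna⟩)
      · rintro (⟨h1, h2⟩ | hna)
        · exact ⟨h1, fun h => h.1.2 h2⟩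
        · exact ⟨(hNAsub hna).1, fun h => h.2 hna⟩
    have hspan : ∀ b ∈ A, b ∈ M.closure Y := by
      intro b hb
      have hbD : b ∈ D := hAsub hb
      have hbE : b ∈ M.E := hB2.subset_ground hbD.1
      rw [← hBF]
      refine base_closure_of_forall hB1 (toFinite B1) hbE hbD.2
        (diff_subset.trans diff_subset) (fun e he => ?_)
      by_contra hecl
      have heB1 : e ∈ B1 := he.1.1
      have hbe : b ≠ e := fun h => hbD.2 (h ▸ heB1)
      have hind : M.Indep (insert b (B1 \ {e})) := by
        have hB1e : M.Indep (B1 \ {e}) := hB1.indep.subset diff_subset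
        rw [hB1e.insert_indep_iff_of_notMem (fun h => hbD.2 h.1)]
        exact ⟨hbE, hecl⟩
      have : M.IsBase (insert b (B1 \ {e})) := hB1.exchange_isBase_of_indep hbD.2 hind
      exact he.2 ((hNAmem e).2 ⟨b, hb, he.1, this⟩)
    -- cardinality bound via independence
    have hIind : M.Indep (A ∪ (B1 ∩ B2)) :=
      hB2.indep.subset (union_subset (hAsub.trans diff_subset) inter_subset_right)
    have hYind : M.Indep Y := hB1.indep.subset hYB1
    have hIcl : A ∪ (B1 ∩ B2) ⊆ M.closure Y := by
      refine union_subset (fun b hb => hspan b hb) ?_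
      exact (subset_union_left).trans (M.subset_closure Y (hYB1.trans hB1.subset_ground))
    obtain ⟨J, hJ, hIJ⟩ := hIind.subset_isBasis_of_subset hIcl (M.closure_subset_ground Y)
    have hYJ : J.encard = Y.encard := hJ.encard_eq_encard hYind.isBasis_closure
    have hIle : (A ∪ (B1 ∩ B2)).encard ≤ Y.encard := hYJ ▸ encard_le_encard hIJ
    have hdisj1 : Disjoint A (B1 ∩ B2) :=
      disjoint_left.2 (fun x hx hx2 => (hAsub hx).2 hx2.1)
    have hdisj2 : Disjoint NA (B1 ∩ B2) :=
      disjoint_left.2 (fun x hx hx2 => (hNAsub hx).2 hx2.2)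
    rw [encard_union_eq hdisj1] at hIle
    rw [hY, union_comm, encard_union_eq hdisj2] at hIle
    have hAcard : A.encard ≤ NA.encard := by
      have hfin : (B1 ∩ B2).encard ≠ ⊤ := (toFinite _).encard_lt_top.ne
      exact WithTop.le_of_add_le_add_right hfin hIle
    -- translate to Finset cards
    have h1 : A.encard = s.card := by
      rw [hA, (Set.injOn_of_injective Subtype.val_injective).encard_image,
        encard_coe_eq_coe_finsetCard]
    have h2 : NA.encard = (s.biUnion (fun b => t b.1)).card := by
      rw [hNA, encard_coe_eq_coe_finsetCard]
    rw [h1, h2] at hAcard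
    exact_mod_cast hAcard
  obtain ⟨g, hginj, hgmem⟩ :=
    (Finset.all_card_le_biUnion_card_iff_existsInjective' (fun b : {x // x ∈ D} => t b.1)).1 hhall
  refine ⟨fun x => if h : x ∈ D then g ⟨x, h⟩ else x, ?_, ?_⟩
  · intro x hx y hy hxy
    simp only [dif_pos hx, dif_pos hy] at hxy
    exact congrArg Subtype.val (hginj hxy)
  · intro b hb
    have := hgmem ⟨b, hb⟩
    simp only [ht, Finset.mem_filter, Finset.mem_univ, true_and] at this
    simpa only [dif_pos hb] using this

lemma submod_add_sum {X : Type*} (f : Set X → ℝ) (hf : SubmodularOn f) (S : Set X) :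
    ∀ T : Finset X, (∀ b ∈ T, b ∉ S) →
      f (S ∪ ↑T) ≤ f S + ∑ b ∈ T, (f (insert b S) - f S) := by
  classical
  intro T
  induction T using Finset.induction_on with
  | empty => simp
  | @insert a T ha ih =>
    intro hT
    have haS : a ∉ S := hT a (Finset.mem_insert_self a T)
    have haT : a ∉ (S ∪ ↑T) := by
      rintro (h | h)
      · exact haS h
      · exact ha h
    have hsub := hf (insert a S) (S ∪ ↑T)
    have he1 : insert a S ∪ (S ∪ ↑T) = insert a (S ∪ ↑T) := by
      ext x; simp; tauto
    have he2 : insert a S ∩ (S ∪ ↑T) = S := by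
      ext x
      simp only [mem_inter_iff, mem_insert_iff, mem_union, Finset.mem_coe]
      constructor
      · rintro ⟨rfl | hxS, hx2⟩
        · rcases hx2 with h | h
          · exact h
          · exact absurd h ha
        · exact hxS
      · exact fun h => ⟨Or.inr h, Or.inl h⟩
    rw [he1, he2] at hsub
    have hih := ih (fun b hb => hT b (Finset.mem_insert_of_mem hb))
    rw [Finset.coe_insert, Set.union_insert, Finset.sum_insert ha]
    linarith

lemma submod_del_sum {X : Type*} (f : Set X → ℝ) (hf : SubmodularOn f) (S : Set X) :
    ∀ E : Finset X, ↑E ⊆ S →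
      ∑ e ∈ E, (f S - f (S \ {e})) ≤ f S - f (S \ ↑E) := by
  classical
  intro E
  induction E using Finset.induction_on with
  | empty => simp
  | @insert a E ha ih =>
    intro hE
    have hsub := hf (S \ {a}) (S \ ↑E)
    have he1 : (S \ {a}) ∪ (S \ ↑E) = S := by
      ext x
      simp only [mem_union, mem_diff, mem_singleton_iff, Finset.mem_coe]
      constructor
      · rintro (⟨h, _⟩ | ⟨h, _⟩) <;> exact h
      · intro hx
        by_cases hxa : x = a
        · exact Or.inr ⟨hx, fun h => ha (hxa ▸ h)⟩
        · exact Or.inl ⟨hx, hxa⟩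
    have he2 : (S \ {a}) ∩ (S \ ↑E) = S \ ↑(insert a E) := by
      ext x
      simp only [mem_inter_iff, mem_diff, mem_singleton_iff, Finset.coe_insert,
        mem_insert_iff, Finset.mem_coe]
      tauto
    rw [he1, he2] at hsub
    have hih := ih ((Finset.coe_subset.2 (Finset.subset_insert a E)).trans hE)
    rw [Finset.sum_insert ha]
    linarith

/-- Local-search guarantee under a matroid constraint (Lemma 2.2 of LMNS):
if `S` is independent and locally optimal with respect to adding, deleting and swapping
single elements, then for any independent `C`,
`2 f(S) ≥ f(S ∪ C) + f(S ∩ C) ≥ f(S ∪ C)`. -/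
theorem matroid_local_search_guarantee
    {X : Type*} [Fintype X] (M : Matroid X) (f : Set X → ℝ)
    (hf0 : ∀ S : Set X, 0 ≤ f S) (hf : SubmodularOn f)
    (S : Set X) (hS : M.Indep S)
    (hAdd : ∀ i ∉ S, M.Indep (insert i S) → f (insert i S) ≤ f S)
    (hDel : ∀ i ∈ S, M.Indep (S \ {i}) → f (S \ {i}) ≤ f S)
    (hSwap : ∀ i ∉ S, ∀ j ∈ S, M.Indep (insert i (S \ {j})) →
      f (insert i (S \ {j})) ≤ f S)
    (C : Set X) (hC : M.Indep C) :
    f (S ∪ C) + f (S ∩ C) ≤ 2 * f S ∧ f (S ∪ C) ≤ f (S ∪ C) + f (S ∩ C) := by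
  classical
  refine ⟨?_, by linarith [hf0 (S ∩ C)]⟩
  set U : Set X := S ∪ C with hU
  have hUE : U ⊆ M.E := union_subset hS.subset_ground hC.subset_ground
  obtain ⟨S', hS'b, hSS'⟩ := hS.subset_isBasis_of_subset subset_union_left hUE
  obtain ⟨C', hC'b, hCC'⟩ := hC.subset_isBasis_of_subset subset_union_right hUE
  have hS'base : (M ↾ U).IsBase S' := hS'b.restrict_isBase
  have hC'base : (M ↾ U).IsBase C' := hC'b.restrict_isBase
  have hS'U : S' ⊆ U := hS'b.subset
  have hC'U : C' ⊆ U := hC'b.subset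
  have hS'ind : M.Indep S' := hS'b.indep
  obtain ⟨σ, hinj, hσ⟩ := exists_exchange_inj hS'base hC'base
  -- the Finset of C \ S
  set Tfin : Finset X := (C \ S).toFinite.toFinset with hTfin
  have hTco : (↑Tfin : Set X) = C \ S := Set.Finite.coe_toFinset _
  have hTmem : ∀ b, b ∈ Tfin ↔ b ∈ C \ S := fun b => Set.Finite.mem_toFinset _
  -- step 1: adding marginals
  have hstep1 : f (S ∪ C) ≤ f S + ∑ b ∈ Tfin, (f (insert b S) - f S) := by
    have := submod_add_sum f hf S Tfin (fun b hb => ((hTmem b).1 hb).2)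
    rwa [hTco, Set.union_diff_self] at this
  -- per-element bounds
  have hterm : ∀ b ∈ Tfin, f (insert b S) - f S ≤
      (if b ∉ S' then f S - f (S \ {σ b}) else 0) := by
    intro b hb
    obtain ⟨hbC, hbS⟩ := (hTmem b).1 hb
    by_cases hbS' : b ∈ S'
    · simp only [hbS', not_true_eq_false, if_false]
      have : M.Indep (insert b S) := hS'ind.subset (insert_subset hbS' hSS')
      linarith [hAdd b hbS this]
    · simp only [hbS', not_false_eq_true, if_true]
      have hbD : b ∈ C' \ S' := ⟨hCC' hbC, hbS'⟩
      obtain ⟨hσb, hbase⟩ := hσ b hbD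
      set e : X := σ b with he
      have heS : e ∈ S := by
        rcases hS'U hσb.1 with h | h
        · exact h
        · exact absurd (hCC' h) hσb.2
      have heC : e ∉ C := fun h => hσb.2 (hCC' h)
      -- insert b (S \ {e}) is independent
      have hindep : M.Indep (insert b (S \ {e})) := by
        have h1 : (M ↾ U).Indep (insert b (S' \ {e})) := hbase.indep
        have h2 : M.Indep (insert b (S' \ {e})) := (Matroid.restrict_indep_iff.1 h1).1
        exact h2.subset (insert_subset_insert (diff_subset_diff_left hSS'))
      have hsw := hSwap b hbS e heS hindep
      -- submodularity: f(insert b S) + f(S \ {e}) ≤ f(insert b (S \ {e})) + f S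
      have hsub := hf (insert b (S \ {e})) S
      have he1 : insert b (S \ {e}) ∪ S = insert b S := by
        ext x
        simp only [mem_union, mem_insert_iff, mem_diff, mem_singleton_iff]
        constructor
        · rintro ((rfl | ⟨h, _⟩) | h)
          · exact Or.inl rfl
          · exact Or.inr h
          · exact Or.inr h
        · rintro (rfl | h)
          · exact Or.inl (Or.inl rfl)
          · exact Or.inr h
      have he2 : insert b (S \ {e}) ∩ S = S \ {e} := by
        ext x
        simp only [mem_inter_iff, mem_insert_iff, mem_diff, mem_singleton_iff]
        constructor
        · rintro ⟨rfl | h, hx2⟩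
          · exact absurd hx2 hbS
          · exact h
        · exact fun h => ⟨Or.inr h, h.1⟩
      rw [he1, he2] at hsub
      linarith
  have hstep2 : ∑ b ∈ Tfin, (f (insert b S) - f S) ≤
      ∑ b ∈ Tfin, (if b ∉ S' then f S - f (S \ {σ b}) else 0) :=
    Finset.sum_le_sum hterm
  -- the swap part
  set Dsw : Finset X := Tfin.filter (fun b => b ∉ S') with hDsw
  have hstep3 : ∑ b ∈ Tfin, (if b ∉ S' then f S - f (S \ {σ b}) else 0) =
      ∑ b ∈ Dsw, (f S - f (S \ {σ b})) := (Finset.sum_filter _ _).symm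
  have hDswD : ∀ b ∈ Dsw, b ∈ C' \ S' := by
    intro b hb
    rw [hDsw, Finset.mem_filter] at hb
    exact ⟨hCC' ((hTmem b).1 hb.1).1, hb.2⟩
  have hstep4 : ∑ b ∈ Dsw, (f S - f (S \ {σ b})) =
      ∑ e ∈ Dsw.image σ, (f S - f (S \ {e})) := by
    rw [Finset.sum_image]
    intro x hx y hy hxy
    exact hinj (hDswD x hx) (hDswD y hy) hxy
  -- compare with the full sum over S \ C
  set Kfin : Finset X := (S \ C).toFinite.toFinset with hKfin
  have hKmem : ∀ e, e ∈ Kfin ↔ e ∈ S \ C := fun e => Set.Finite.mem_toFinset _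
  have himgsub : Dsw.image σ ⊆ Kfin := by
    intro e he
    obtain ⟨b, hb, rfl⟩ := Finset.mem_image.1 he
    obtain ⟨hσb, _⟩ := hσ b (hDswD b hb)
    refine (hKmem (σ b)).2 ⟨?_, fun h => hσb.2 (hCC' h)⟩
    rcases hS'U hσb.1 with h | h
    · exact h
    · exact absurd (hCC' h) hσb.2
  have hnonneg : ∀ e ∈ Kfin, 0 ≤ f S - f (S \ {e}) := by
    intro e he
    obtain ⟨heS, _⟩ := (hKmem e).1 he
    have : M.Indep (S \ {e}) := hS.subset diff_subset
    linarith [hDel e heS this]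
  have hstep5 : ∑ e ∈ Dsw.image σ, (f S - f (S \ {e})) ≤
      ∑ e ∈ Kfin, (f S - f (S \ {e})) :=
    Finset.sum_le_sum_of_subset_of_nonneg himgsub (fun e he _ => hnonneg e he)
  have hstep6 : ∑ e ∈ Kfin, (f S - f (S \ {e})) ≤ f S - f (S ∩ C) := by
    have hco : (↑Kfin : Set X) = S \ C := Set.Finite.coe_toFinset _
    have := submod_del_sum f hf S Kfin (hco ▸ diff_subset)
    rw [hco] at this
    have hdd : S \ (S \ C) = S ∩ C := by ext x; simp
    rwa [hdd] at this
  linarith
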